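/- Let $k$ be a finite field of characteristic 2 and $e\in k^*$. If $e$ is not a cube in $k^*$, then $x^4+x^3+x^2+x+e$ factors over $k$ as a product of an irreducible linear factor and an irreducible cubic factor. -/

import Mathlib

open Polynomial

theorem stmt_10 (k : Type*) [Field k] [Fintype k] [CharP k 2]
    (e : k) (he : e ≠ 0) (hcube : ¬ ∃ c : k, c ^ 3 = e) :
    ∃ f g : k[X], f.Monic ∧ f.degree = 1 ∧ g.Monic ∧ g.degree = 3 ∧
      Irreducible g ∧ (X ^ 4 + X ^ 3 + X ^ 2 + X + C e : k[X]) = f * g := by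
  classical
  have h2 : (2 : k) = 0 := by exact_mod_cast CharP.cast_eq_zero k 2
  -- basic facts about non-cubes
  have hne1 : ∀ x : k, (¬ ∃ c : k, c ^ 3 = x) → x ≠ 1 := by
    rintro x h rfl; exact h ⟨1, one_pow 3⟩
  have hne0 : ∀ x : k, (¬ ∃ c : k, c ^ 3 = x) → x ≠ 0 := by
    rintro x h rfl; exact h ⟨0, zero_pow (by norm_num)⟩
  have hadd1 : ∀ x : k, x ≠ 1 → x + 1 ≠ 0 := by
    intro x hx h
    apply hx
    have := eq_neg_of_add_eq_zero_left h
    rwa [CharTwo.neg_eq] at this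
  -- the set of non-cubes
  set S : Finset k := Finset.univ.filter (fun x => ¬ ∃ c : k, c ^ 3 = x) with hSdef
  have memS : ∀ x : k, x ∈ S ↔ ¬ ∃ c : k, c ^ 3 = x := by
    intro x; simp [hSdef]
  -- ψ maps S into S
  have hmaps : ∀ x ∈ S, x * (x + 1) ^ 3 ∈ S := by
    intro x hx
    rw [memS] at hx ⊢
    rintro ⟨d, hd⟩
    have hx1 : x + 1 ≠ 0 := hadd1 x (hne1 x hx)
    exact hx ⟨d / (x + 1), by
      field_simp
      linear_combination hd⟩
  -- ψ is injective on S
  have hinj : ∀ x ∈ S, ∀ y ∈ S, x * (x + 1) ^ 3 = y * (y + 1) ^ 3 → x = y := by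
    intro x hxS y hyS hxy
    rw [memS] at hxS hyS
    by_contra hne
    have hs : x + y ≠ 0 := by
      intro h
      apply hne
      have := eq_neg_of_add_eq_zero_left h
      rwa [CharTwo.neg_eq] at this
    have key : (x + y) * (x * y + (x + y + 1) ^ 3) = 0 := by
      linear_combination hxy + (5*x^2*y + 2*x^3*y + 3*x^2*y^2 + 2*x*y^3 + 5*x*y^2
        + 3*x*y + y^4 + 3*y^3 + 3*y^2 + y) * h2
    have p_eq : x * y = (x + y + 1) ^ 3 := by
      have h0 : x * y + (x + y + 1) ^ 3 = 0 := by
        rcases mul_eq_zero.mp key with h | h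
        · exact absurd h hs
        · exact h
      linear_combination h0 - (x + y + 1) ^ 3 * h2
    have step1 : (x * (x + 1) ^ 3) * (x * (x + 1) ^ 3)
        = (x * y) * ((x * y) + x + y + 1) ^ 3 := by
      linear_combination (x * (x + 1) ^ 3) * hxy
    rw [p_eq] at step1
    have hE2 : (x * (x + 1) ^ 3) * (x * (x + 1) ^ 3)
        = ((x + y + 1) * ((x + y + 1) ^ 3 + x + y + 1)) ^ 3 := by
      rw [step1]; ring
    have hx1 : x + 1 ≠ 0 := hadd1 x (hne1 x hxS)
    have hEne : x * (x + 1) ^ 3 ≠ 0 := mul_ne_zero (hne0 x hxS) (pow_ne_zero _ hx1)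
    have hcne : (x + y + 1) * ((x + y + 1) ^ 3 + x + y + 1) ≠ 0 := by
      intro h
      rw [h] at hE2
      simp only [zero_pow, ne_eq, OfNat.ofNat_ne_zero, not_false_eq_true] at hE2
      exact mul_ne_zero hEne hEne hE2
    apply hxS
    refine ⟨(x * (x + 1) ^ 3) / (((x + y + 1) * ((x + y + 1) ^ 3 + x + y + 1)) * (x + 1)), ?_⟩
    rw [div_pow, div_eq_iff (pow_ne_zero _ (mul_ne_zero hcne hx1))]
    linear_combination (x * (x + 1) ^ 3) * hE2
  -- surjectivity of ψ on S gives a root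
  have heS : e ∈ S := (memS e).mpr hcube
  obtain ⟨a, haS, hae⟩ := Finset.surj_on_of_inj_on_of_card_le
    (fun x (_ : x ∈ S) => x * (x + 1) ^ 3) (fun x hx => hmaps x hx)
    (fun x y hx hy h => hinj x hx y hy h) le_rfl e heS
  -- hae : e = a * (a+1)^3
  have haC : ¬ ∃ c : k, c ^ 3 = a := (memS a).mp haS
  have ha1 : a + 1 ≠ 0 := hadd1 a (hne1 a haC)
  set g : k[X] := X ^ 3 + C (a + 1) * X ^ 2 + C (a ^ 2 + a + 1) * X
    + C (a ^ 3 + a ^ 2 + a + 1) with hgdef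
  have hgmonic : g.Monic := by
    unfold g
    monicity!
  have hgnat : g.natDegree = 3 := by
    unfold g
    compute_degree!
  have hgdeg : g.degree = 3 := by
    unfold g
    compute_degree!
  have hC2 : (2 : k[X]) = 0 := by
    rw [← map_ofNat (C : k →+* k[X]) 2, h2, map_zero]
  have hCe : (C e : k[X]) = C a * (C a + 1) ^ 3 := by
    rw [hae]
    simp only [map_mul, map_pow, map_add, map_one]
  have hprod : (X ^ 4 + X ^ 3 + X ^ 2 + X + C e : k[X]) = (X - C a) * g := by
    unfold g
    simp only [map_add, map_pow, map_mul, map_one]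
    linear_combination hCe + ((C a) + 2 * (C a) ^ 2 + 2 * (C a) ^ 3 + (C a) ^ 4) * hC2
  -- any root of the quartic equals a
  have hroot_unique : ∀ r : k, r ^ 4 + r ^ 3 + r ^ 2 + r + e = 0 → r = a := by
    intro r hr
    have hr' : r * (r + 1) ^ 3 = e := by
      linear_combination hr + (r ^ 3 + r ^ 2 - e) * h2
    have hrS : r ∈ S := by
      rw [memS]
      rintro ⟨d, hd⟩
      exact hcube ⟨d * (r + 1), by linear_combination (r + 1) ^ 3 * hd + hr'⟩
    exact hinj r hrS a haS (by rw [hr', hae])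
  -- g has no roots
  have hgzero : g.roots = 0 := by
    rw [Multiset.eq_zero_iff_forall_notMem]
    intro r hr
    rw [mem_roots hgmonic.ne_zero] at hr
    have hq : r ^ 4 + r ^ 3 + r ^ 2 + r + e = 0 := by
      have h := congrArg (Polynomial.eval r) hprod
      simp only [eval_add, eval_mul, eval_pow, eval_sub, eval_X, eval_C] at h
      rw [show Polynomial.eval r g = 0 from hr, mul_zero] at h
      linear_combination h
    have hra : r = a := hroot_unique r hq
    have hga : Polynomial.eval a g = (a + 1) * (a + 1) := by
      unfold g
      simp only [eval_add, eval_mul, eval_pow, eval_X, eval_C]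
      linear_combination (2 * a ^ 3 + a ^ 2) * h2
    have h0 : Polynomial.eval r g = 0 := hr
    rw [hra, hga] at h0
    rcases mul_eq_zero.mp h0 with h | h <;> exact ha1 h
  refine ⟨X - C a, g, monic_X_sub_C a, degree_X_sub_C a, hgmonic, hgdeg, ?_, hprod⟩
  rw [hgmonic.irreducible_iff_roots_eq_zero_of_degree_le_three (by rw [hgnat]; norm_num) (by rw [hgnat])]
  exact hgzero
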